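/- Let α > 0, f ≥ 0, and let X, Y be two Leray solutions of the forced inviscid DN model on [0, ∞) with X_n(t) ≥ 0 and Y_n(t) ≥ 0 for all n ≥ 1, t ≥ 0, and with X_n(0) = Y_n(0) for all n ≥ 1. Then X_n(t) = Y_n(t) for all n ≥ 1 and t ≥ 0; i.e., non-negative Leray solutions of the DN model are unique. -/

import Mathlib

open Set Finset MeasureTheory intervalIntegral
namespace Stmt9

noncomputable def Wt (n : ℕ) : ℝ := (1/2 : ℝ)^n
lemma Wt_pos (n : ℕ) : 0 < Wt n := by unfold Wt; positivity
lemma Wt_succ (n : ℕ) : Wt (n+1) = Wt n * (1/2) := pow_succ _ _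
lemma Wt_le_one (n : ℕ) : Wt n ≤ 1 := by
  unfold Wt; exact pow_le_one₀ (by norm_num) (by norm_num)
lemma sum_Wt_le (N : ℕ) : ∑ i ∈ Finset.range N, Wt (i+1) ≤ 1 - Wt N := by
  induction N with
  | zero => simp [Wt]
  | succ n ih =>
    rw [Finset.sum_range_succ]
    have h := Wt_succ n
    nlinarith [Wt_pos n]

structure IsSol (k f B : ℝ) (U : ℕ → ℝ → ℝ) : Prop where
  hk : 1 ≤ k
  hB : 0 ≤ B
  hf : 0 ≤ f
  h0 : ∀ s, U 0 s = f
  deriv : ∀ i : ℕ, ∀ s ∈ Ici (0:ℝ), HasDerivWithinAt (U (i+1))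
      (k^i * (U i s)^2 - k^(i+1) * U (i+1) s * U (i+2) s) (Ici 0) s
  pos : ∀ n : ℕ, ∀ s ∈ Ici (0:ℝ), 0 ≤ U n s
  ub : ∀ n : ℕ, ∀ s ∈ Ici (0:ℝ), U (n+1) s ≤ B

/-- flux integrand -/
noncomputable def pT (k : ℝ) (U : ℕ → ℝ → ℝ) (n : ℕ) (s : ℝ) : ℝ :=
  Wt n * k^n * (U n s)^2 * U (n+1) s

namespace IsSol
variable {k f B : ℝ} {U : ℕ → ℝ → ℝ}

lemma hk0 (hs : IsSol k f B U) : (0:ℝ) < k := lt_of_lt_of_le one_pos hs.hk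

lemma cont (hs : IsSol k f B U) : ∀ n, ContinuousOn (U n) (Ici 0) := by
  intro n
  cases n with
  | zero =>
    have : U 0 = fun _ => f := funext hs.h0
    rw [this]; exact continuousOn_const
  | succ i => exact fun s hsm => (hs.deriv i s hsm).continuousWithinAt

lemma contpT (hs : IsSol k f B U) (n : ℕ) : ContinuousOn (pT k U n) (Ici 0) :=
  (continuousOn_const.mul ((hs.cont n).pow 2)).mul (hs.cont (n+1))

lemma pT_nonneg (hs : IsSol k f B U) (n : ℕ) {s : ℝ} (hsm : s ∈ Ici (0:ℝ)) :
    0 ≤ pT k U n s := by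
  unfold pT
  have h1 := hs.pos (n+1) s hsm
  have h2 := sq_nonneg (U n s)
  have := Wt_pos n
  have := hs.hk0
  positivity

end IsSol

lemma ftc {F g : ℝ → ℝ} (hF : ∀ s ∈ Ici (0:ℝ), HasDerivWithinAt F (g s) (Ici 0) s)
    (hg : ContinuousOn g (Ici 0)) {t : ℝ} (ht : 0 ≤ t) :
    F t - F 0 = ∫ s in (0:ℝ)..t, g s := by
  symm
  apply intervalIntegral.integral_eq_sub_of_hasDeriv_right_of_le ht
  · intro s hsm
    exact (hF s hsm.1).continuousWithinAt.mono (fun x hx => hx.1 : Icc (0:ℝ) t ⊆ Ici 0)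
  · intro x hx
    exact (hF x (le_of_lt hx.1)).mono (fun y hy => le_trans (le_of_lt hx.1) (le_of_lt hy))
  · exact (hg.mono (by rw [uIcc_of_le ht]; exact fun x hx => hx.1)).intervalIntegrable

lemma integ {g : ℝ → ℝ} (hg : ContinuousOn g (Ici 0)) {t : ℝ} (ht : 0 ≤ t) :
    IntervalIntegrable g volume 0 t :=
  (hg.mono (by rw [uIcc_of_le ht]; exact fun x hx => hx.1)).intervalIntegrable

namespace IsSol
variable {k f B : ℝ} {U : ℕ → ℝ → ℝ}

/-- derivative of truncated weighted energy -/
lemma derivE (hs : IsSol k f B U) (K : ℕ) {s : ℝ} (hsm : s ∈ Ici (0:ℝ)) :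
    HasDerivWithinAt (fun τ => ∑ i ∈ range K, Wt (i+1) * (U (i+1) τ)^2)
      (∑ i ∈ range K, (2 * Wt (i+1) * U (i+1) s) *
        (k^i * (U i s)^2 - k^(i+1) * U (i+1) s * U (i+2) s)) (Ici 0) s := by
  apply HasDerivWithinAt.fun_sum
  intro i _
  have h := hs.deriv i s hsm
  have h2 := (h.fun_pow 2).const_mul (Wt (i+1))
  refine h2.congr_deriv ?_
  ring

lemma contE' (hs : IsSol k f B U) (K : ℕ) :
    ContinuousOn (fun s => ∑ i ∈ range K, (2 * Wt (i+1) * U (i+1) s) *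
        (k^i * (U i s)^2 - k^(i+1) * U (i+1) s * U (i+2) s)) (Ici 0) := by
  apply continuousOn_finset_sum
  intro i _
  exact (continuousOn_const.mul (hs.cont (i+1))).mul
    (((continuousOn_const.mul ((hs.cont i).pow 2))).sub
      ((continuousOn_const.mul (hs.cont (i+1))).mul (hs.cont (i+2))))

/-- pointwise algebraic identity after reindexing -/
lemma eIdent (hs : IsSol k f B U) (N : ℕ) {s : ℝ} :
    ∑ i ∈ range (N+1), (2 * Wt (i+1) * U (i+1) s) *
        (k^i * (U i s)^2 - k^(i+1) * U (i+1) s * U (i+2) s)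
      = f^2 * U 1 s - (∑ i ∈ range N, pT k U (i+1) s) - 2 * pT k U (N+1) s := by
  have hsplit : ∀ i : ℕ, (2 * Wt (i+1) * U (i+1) s) *
        (k^i * (U i s)^2 - k^(i+1) * U (i+1) s * U (i+2) s)
      = (2 * Wt (i+1) * k^i * (U i s)^2 * U (i+1) s) - 2 * pT k U (i+1) s := by
    intro i; unfold pT; ring
  rw [Finset.sum_congr rfl (fun i _ => hsplit i), Finset.sum_sub_distrib]
  rw [Finset.sum_range_succ' (fun i => 2 * Wt (i+1) * k^i * (U i s)^2 * U (i+1) s) N]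
  rw [Finset.sum_range_succ (fun i => 2 * pT k U (i+1) s) N]
  have h0 : 2 * Wt (0+1) * k^0 * (U 0 s)^2 * U (0+1) s = f^2 * U 1 s := by
    rw [hs.h0 s]
    have : Wt 1 = 1/2 := by unfold Wt; norm_num
    rw [this]; ring
  have hterm : ∀ i : ℕ, 2 * Wt (i+1+1) * k^(i+1) * (U (i+1) s)^2 * U (i+1+1) s
      = pT k U (i+1) s := by
    intro i; unfold pT; rw [Wt_succ (i+1)]; ring
  rw [Finset.sum_congr rfl (fun i _ => hterm i), h0]
  rw [← Finset.mul_sum]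
  ring

/-- The summed flux bound. -/
lemma piB (hs : IsSol k f B U) {t : ℝ} (ht : 0 ≤ t) (N : ℕ) :
    ∑ i ∈ range N, (∫ s in (0:ℝ)..t, pT k U (i+1) s) ≤ f^2*B*t + B^2 := by
  -- integrability facts
  have hint : ∀ i : ℕ, IntervalIntegrable (pT k U i) volume 0 t :=
    fun i => integ (hs.contpT i) ht
  -- step 1: Σ∫ = ∫Σ
  rw [← intervalIntegral.integral_finset_sum (fun i _ => hint (i+1))]
  -- step 2: compare with f^2*U1 - e(N+1)
  have hmono : (∫ s in (0:ℝ)..t, ∑ i ∈ range N, pT k U (i+1) s)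
      ≤ ∫ s in (0:ℝ)..t, (f^2 * U 1 s - ∑ i ∈ range (N+1), (2 * Wt (i+1) * U (i+1) s) *
          (k^i * (U i s)^2 - k^(i+1) * U (i+1) s * U (i+2) s)) := by
    apply intervalIntegral.integral_mono_on ht
    · exact integ (continuousOn_finset_sum _ (fun i _ => hs.contpT (i+1))) ht
    · exact integ ((continuousOn_const.mul (hs.cont 1)).sub (hs.contE' (N+1))) ht
    · intro x hx
      have hxm : x ∈ Ici (0:ℝ) := hx.1
      rw [hs.eIdent N]
      have := hs.pT_nonneg (N+1) hxm
      linarith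
  refine le_trans hmono ?_
  rw [intervalIntegral.integral_sub (integ (g := fun s => f^2 * U 1 s) (continuousOn_const.mul (hs.cont 1)) ht)
      (integ (hs.contE' (N+1)) ht)]
  have hftc : (∑ i ∈ range (N+1), Wt (i+1) * (U (i+1) t)^2)
      - (∑ i ∈ range (N+1), Wt (i+1) * (U (i+1) 0)^2)
      = ∫ s in (0:ℝ)..t, ∑ i ∈ range (N+1), (2 * Wt (i+1) * U (i+1) s) *
          (k^i * (U i s)^2 - k^(i+1) * U (i+1) s * U (i+2) s) :=
    ftc (fun s hsm => hs.derivE (N+1) hsm) (hs.contE' (N+1)) ht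
  rw [← hftc]
  have h1 : (∫ s in (0:ℝ)..t, f^2 * U 1 s) ≤ f^2*B*t := by
    have : (∫ s in (0:ℝ)..t, f^2 * U 1 s) ≤ ∫ _ in (0:ℝ)..t, f^2*B := by
      apply intervalIntegral.integral_mono_on ht
        (integ (g := fun s => f^2 * U 1 s) (continuousOn_const.mul (hs.cont 1)) ht)
        (integ continuousOn_const ht)
      intro x hx
      have := hs.ub 0 x hx.1
      nlinarith [sq_nonneg f]
    have h0' : (∫ _ in (0:ℝ)..t, f^2*B) = f^2*B*t := by
      rw [intervalIntegral.integral_const, smul_eq_mul]; ring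
    rw [h0'] at this
    exact this
  have h2 : 0 ≤ ∑ i ∈ range (N+1), Wt (i+1) * (U (i+1) t)^2 := by
    apply Finset.sum_nonneg
    intro i _
    have := Wt_pos (i+1)
    positivity
  have h3 : ∑ i ∈ range (N+1), Wt (i+1) * (U (i+1) 0)^2 ≤ B^2 := by
    have hz : (0:ℝ) ∈ Ici (0:ℝ) := Set.self_mem_Ici
    calc ∑ i ∈ range (N+1), Wt (i+1) * (U (i+1) 0)^2
        ≤ ∑ i ∈ range (N+1), Wt (i+1) * B^2 := by
          apply Finset.sum_le_sum; intro i _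
          have hu := hs.ub i 0 hz
          have hp := hs.pos (i+1) 0 hz
          have hsq : (U (i+1) 0)^2 ≤ B^2 := by nlinarith
          exact mul_le_mul_of_nonneg_left hsq (Wt_pos (i+1)).le
      _ = (∑ i ∈ range (N+1), Wt (i+1)) * B^2 := by rw [Finset.sum_mul]
      _ ≤ 1 * B^2 := by nlinarith [sum_Wt_le (N+1), Wt_pos (N+1), sq_nonneg B]
      _ = B^2 := one_mul _
  linarith



end IsSol

/-- core AM-GM inequality for the Besov-1/3 estimate -/
lemma core {k W K A Bv Cv E0 : ℝ} (hk : 1 ≤ k) (hW : 0 < W) (hK : 0 < K)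
    (hA : 0 ≤ A) (hB : 0 ≤ Bv) (hC : 0 ≤ Cv) (hE : 0 ≤ E0) :
    W*K*A^3 ≤ W*((E0 - K*A*Bv)*Bv + A*(K*A^2 - K*k*Bv*Cv))
      + (8*k + k/2)*(W*K*(A^2*Bv)) + 8*k*((W*(1/2))*(K*k)*(Bv^2*Cv))
      + (1/(16*k^2))*((W*(1/2))*(K*k)*Bv^3)
      + (1/(16*k^2))*((W*(1/2)*(1/2))*((K*k)*k)*Cv^3) := by
  have hk0 : (0:ℝ) < k := lt_of_lt_of_le one_pos hk
  have hkne : k ≠ 0 := ne_of_gt hk0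
  have h64 : (0:ℝ) < 64*k^2 := by positivity
  rw [← mul_le_mul_iff_right₀ h64]
  have h1 : 32*k*(A*Bv^2) ≤ 256*k^2*(A^2*Bv) + Bv^3 := by
    nlinarith [mul_nonneg hB (sq_nonneg (16*k*A - Bv))]
  have h3 : 32*k*(Bv*Cv^2) ≤ 256*k^2*(Bv^2*Cv) + Cv^3 := by
    nlinarith [mul_nonneg hC (sq_nonneg (16*k*Bv - Cv))]
  have h2 : A*Bv*Cv ≤ Bv*(A^2+Cv^2)/2 := by
    nlinarith [mul_nonneg hB (sq_nonneg (A - Cv))]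
  have s1 : 2*k*(W*K)*(32*k*(A*Bv^2)) ≤ 2*k*(W*K)*(256*k^2*(A^2*Bv) + Bv^3) :=
    mul_le_mul_of_nonneg_left h1 (by positivity)
  have s2 : 64*k^3*(W*K)*(A*Bv*Cv) ≤ 64*k^3*(W*K)*(Bv*(A^2+Cv^2)/2) :=
    mul_le_mul_of_nonneg_left h2 (by positivity)
  have s3 : k^2*(W*K)*(32*k*(Bv*Cv^2)) ≤ k^2*(W*K)*(256*k^2*(Bv^2*Cv) + Cv^3) :=
    mul_le_mul_of_nonneg_left h3 (by positivity)
  have hE' : (0:ℝ) ≤ 64*k^2*W*E0*Bv := by positivity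
  have hexp : 64*k^2 * (W*((E0 - K*A*Bv)*Bv + A*(K*A^2 - K*k*Bv*Cv))
      + (8*k + k/2)*(W*K*(A^2*Bv)) + 8*k*((W*(1/2))*(K*k)*(Bv^2*Cv))
      + (1/(16*k^2))*((W*(1/2))*(K*k)*Bv^3)
      + (1/(16*k^2))*((W*(1/2)*(1/2))*((K*k)*k)*Cv^3))
      = 64*k^2*W*E0*Bv - 2*k*(W*K)*(32*k*(A*Bv^2)) + 64*k^2*(W*K*A^3)
        - 64*k^3*(W*K)*(A*Bv*Cv) + 544*k^3*(W*K)*(A^2*Bv)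
        + 256*k^4*(W*K)*(Bv^2*Cv) + 2*k*(W*K)*Bv^3 + k^2*(W*K)*Cv^3 := by
    field_simp
    ring
  rw [hexp]
  nlinarith [s1, s2, s3, hE']

/-- cube integrand -/
noncomputable def lT (k : ℝ) (U : ℕ → ℝ → ℝ) (n : ℕ) (s : ℝ) : ℝ :=
  Wt n * k^n * (U n s)^3

/-- derivative summand for the H functional -/
noncomputable def hT (k : ℝ) (U : ℕ → ℝ → ℝ) (i : ℕ) (s : ℝ) : ℝ :=
  Wt (i+1) * ((k^i*(U i s)^2 - k^(i+1)*U (i+1) s*U (i+2) s)*U (i+2) s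
    + U (i+1) s*(k^(i+1)*(U (i+1) s)^2 - k^(i+2)*U (i+2) s*U (i+3) s))

namespace IsSol
variable {k f B : ℝ} {U : ℕ → ℝ → ℝ}

lemma contlT (hs : IsSol k f B U) (n : ℕ) : ContinuousOn (lT k U n) (Ici 0) :=
  continuousOn_const.mul ((hs.cont n).pow 3)

lemma lT_nonneg (hs : IsSol k f B U) (n : ℕ) {s : ℝ} (hsm : s ∈ Ici (0:ℝ)) :
    0 ≤ lT k U n s := by
  unfold lT
  have h1 := hs.pos n s hsm
  have := Wt_pos n
  have := hs.hk0
  positivity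

lemma conthT (hs : IsSol k f B U) (i : ℕ) : ContinuousOn (hT k U i) (Ici 0) := by
  unfold hT
  apply continuousOn_const.mul
  exact (((continuousOn_const.mul ((hs.cont i).pow 2)).sub
      ((continuousOn_const.mul (hs.cont (i+1))).mul (hs.cont (i+2)))).mul (hs.cont (i+2))).add
    ((hs.cont (i+1)).mul ((continuousOn_const.mul ((hs.cont (i+1)).pow 2)).sub
      ((continuousOn_const.mul (hs.cont (i+2))).mul (hs.cont (i+3)))))

/-- derivative of the cross functional `H` -/
lemma derivH (hs : IsSol k f B U) (K : ℕ) {s : ℝ} (hsm : s ∈ Ici (0:ℝ)) :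
    HasDerivWithinAt (fun τ => ∑ i ∈ range K, Wt (i+1) * (U (i+1) τ * U (i+2) τ))
      (∑ i ∈ range K, hT k U i s) (Ici 0) s := by
  apply HasDerivWithinAt.fun_sum
  intro i _
  have h := ((hs.deriv i s hsm).fun_mul (hs.deriv (i+1) s hsm)).const_mul (Wt (i+1))
  exact h.congr_deriv rfl

/-- pointwise bounds on the H functional -/
lemma Hbounds (hs : IsSol k f B U) (K : ℕ) {τ : ℝ} (hτ : τ ∈ Ici (0:ℝ)) :
    0 ≤ (∑ i ∈ range K, Wt (i+1) * (U (i+1) τ * U (i+2) τ)) ∧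
    (∑ i ∈ range K, Wt (i+1) * (U (i+1) τ * U (i+2) τ)) ≤ B^2 := by
  constructor
  · apply Finset.sum_nonneg
    intro i _
    exact mul_nonneg (Wt_pos _).le (mul_nonneg (hs.pos (i+1) τ hτ) (hs.pos (i+2) τ hτ))
  · calc (∑ i ∈ range K, Wt (i+1) * (U (i+1) τ * U (i+2) τ))
        ≤ ∑ i ∈ range K, Wt (i+1) * B^2 := by
          apply Finset.sum_le_sum
          intro i _
          apply mul_le_mul_of_nonneg_left _ (Wt_pos (i+1)).le
          have h1 := hs.ub i τ hτ
          have h2 := hs.ub (i+1) τ hτ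
          have h3 := hs.pos (i+1) τ hτ
          have h4 := hs.pos (i+2) τ hτ
          nlinarith
      _ = (∑ i ∈ range K, Wt (i+1)) * B^2 := by rw [Finset.sum_mul]
      _ ≤ 1 * B^2 := by nlinarith [sum_Wt_le K, Wt_pos K, sq_nonneg B]
      _ = B^2 := one_mul _

/-- pointwise per-term inequality -/
lemma lam_perterm (hs : IsSol k f B U) (i : ℕ) {s : ℝ} (hsm : s ∈ Ici (0:ℝ)) :
    lT k U (i+1) s ≤ hT k U i s
      + (8*k + k/2) * pT k U (i+1) s + 8*k * pT k U (i+2) s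
      + (1/(16*k^2)) * lT k U (i+2) s + (1/(16*k^2)) * lT k U (i+3) s := by
  have hc := core (k := k) (W := Wt (i+1)) (K := k^(i+1)) (A := U (i+1) s)
      (Bv := U (i+2) s) (Cv := U (i+3) s) (E0 := k^i*(U i s)^2)
      hs.hk (Wt_pos (i+1)) (pow_pos hs.hk0 (i+1))
      (hs.pos (i+1) s hsm) (hs.pos (i+2) s hsm) (hs.pos (i+3) s hsm)
      (by have h1 := sq_nonneg (U i s); have h2 := hs.hk0; positivity)
  unfold lT pT hT
  rw [show Wt (i+2) = Wt (i+1)*(1/2) from Wt_succ _,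
      show Wt (i+3) = Wt (i+1)*(1/2)*(1/2) from by rw [Wt_succ (i+2), Wt_succ (i+1)],
      show k^(i+2) = k^(i+1)*k from pow_succ _ _,
      show k^(i+3) = k^(i+1)*k*k from by rw [pow_succ, pow_succ]]
  calc Wt (i+1)*(k^(i+1))*(U (i+1) s)^3 ≤ _ := hc
    _ = _ := by ring

/-- the Besov-1/3 type bound -/
lemma lamB (hs : IsSol k f B U) {t : ℝ} (ht : 0 ≤ t) :
    ∃ C : ℝ, 0 ≤ C ∧ ∀ N, (∑ i ∈ range N, ∫ s in (0:ℝ)..t, lT k U (i+1) s) ≤ C := by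
  have hz : (0:ℝ) ∈ Ici (0:ℝ) := Set.self_mem_Ici
  set PB := f^2*B*t + B^2 with hPB
  have hPB0 : 0 ≤ PB := by
    rw [hPB]
    have h1 := hs.hB
    positivity
  set A0 : ℝ := 2*B^2 + (8*k+k/2)*PB + 8*k*PB with hA0
  have hA00 : 0 ≤ A0 := by
    rw [hA0]
    have h1 := mul_nonneg (by have := hs.hk0; positivity : (0:ℝ) ≤ 8*k+k/2) hPB0
    have h2 := mul_nonneg (by have := hs.hk0; positivity : (0:ℝ) ≤ 8*k) hPB0
    have h3 := sq_nonneg B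
    linarith
  set G : ℝ := B^3*t with hG
  have hG0 : 0 ≤ G := by
    have := hs.hB
    positivity
  set Lam : ℕ → ℝ := fun N => ∑ i ∈ range N, ∫ s in (0:ℝ)..t, lT k U (i+1) s with hLam
  have hint : ∀ n, IntervalIntegrable (lT k U n) volume 0 t := fun n => integ (hs.contlT n) ht
  have hintp : ∀ n, IntervalIntegrable (pT k U n) volume 0 t := fun n => integ (hs.contpT n) ht
  have hinth : ∀ i, IntervalIntegrable (hT k U i) volume 0 t := fun i => integ (hs.conthT i) ht
  have hlT0 : ∀ n, 0 ≤ ∫ s in (0:ℝ)..t, lT k U n s := by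
    intro n
    exact intervalIntegral.integral_nonneg ht (fun u hu => hs.lT_nonneg n hu.1)
  have hpT0 : ∀ n, 0 ≤ ∫ s in (0:ℝ)..t, pT k U n s := by
    intro n
    exact intervalIntegral.integral_nonneg ht (fun u hu => hs.pT_nonneg n hu.1)
  have hmonoLam : ∀ {m n : ℕ}, m ≤ n → Lam m ≤ Lam n := by
    intro m n hmn
    apply Finset.sum_le_sum_of_subset_of_nonneg (Finset.range_subset_range.mpr hmn)
    intro i _ _
    exact hlT0 (i+1)
  have hpTshift : ∀ N, (∑ i ∈ range N, ∫ s in (0:ℝ)..t, pT k U (i+2) s) ≤ PB := by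
    intro N
    have h := hs.piB ht (N+1)
    rw [Finset.sum_range_succ' (fun i => ∫ s in (0:ℝ)..t, pT k U (i+1) s) N] at h
    have := hpT0 1
    rw [hPB]
    linarith
  have hlTshift1 : ∀ N, (∑ i ∈ range N, ∫ s in (0:ℝ)..t, lT k U (i+2) s) ≤ Lam (N+1) := by
    intro N
    have h : Lam (N+1) = (∑ i ∈ range N, ∫ s in (0:ℝ)..t, lT k U (i+2) s)
        + (∫ s in (0:ℝ)..t, lT k U 1 s) := by
      rw [hLam]
      exact Finset.sum_range_succ' (fun i => ∫ s in (0:ℝ)..t, lT k U (i+1) s) N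
    have := hlT0 1
    linarith
  have hlTshift2 : ∀ N, (∑ i ∈ range N, ∫ s in (0:ℝ)..t, lT k U (i+3) s) ≤ Lam (N+2) := by
    intro N
    have h : (∑ i ∈ range N, ∫ s in (0:ℝ)..t, lT k U (i+3) s)
        ≤ ∑ i ∈ range (N+1), ∫ s in (0:ℝ)..t, lT k U (i+2) s := by
      rw [Finset.sum_range_succ' (fun i => ∫ s in (0:ℝ)..t, lT k U (i+2) s) N]
      have := hlT0 2
      linarith
    exact le_trans h (hlTshift1 (N+1))
  -- the recursion
  have hrec : ∀ N, Lam N ≤ A0 + (1/(8*k^2)) * Lam (N+2) := by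
    intro N
    show (∑ i ∈ range N, ∫ s in (0:ℝ)..t, lT k U (i+1) s) ≤ A0 + (1/(8*k^2)) * Lam (N+2)
    have hstep : ∀ i ∈ range N, (∫ s in (0:ℝ)..t, lT k U (i+1) s)
        ≤ (∫ s in (0:ℝ)..t, hT k U i s)
          + ((8*k+k/2) * (∫ s in (0:ℝ)..t, pT k U (i+1) s)
          + (8*k * (∫ s in (0:ℝ)..t, pT k U (i+2) s)
          + ((1/(16*k^2)) * (∫ s in (0:ℝ)..t, lT k U (i+2) s)
          + (1/(16*k^2)) * (∫ s in (0:ℝ)..t, lT k U (i+3) s)))) := by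
      intro i _
      have I0 := hinth i
      have I1 := (hintp (i+1)).const_mul (8*k+k/2)
      have I2 := (hintp (i+2)).const_mul (8*k)
      have I3 := (hint (i+2)).const_mul (1/(16*k^2))
      have I4 := (hint (i+3)).const_mul (1/(16*k^2))
      have hmono : (∫ s in (0:ℝ)..t, lT k U (i+1) s) ≤ ∫ s in (0:ℝ)..t,
          (hT k U i s + ((8*k+k/2) * pT k U (i+1) s + (8*k * pT k U (i+2) s
           + ((1/(16*k^2)) * lT k U (i+2) s + (1/(16*k^2)) * lT k U (i+3) s)))) := by
        apply intervalIntegral.integral_mono_on ht (hint (i+1))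
        · exact I0.add (I1.add (I2.add (I3.add I4)))
        · intro x hx
          have h := hs.lam_perterm i hx.1
          linarith
      rw [intervalIntegral.integral_add I0 (I1.add (I2.add (I3.add I4))),
          intervalIntegral.integral_add I1 (I2.add (I3.add I4)),
          intervalIntegral.integral_add I2 (I3.add I4),
          intervalIntegral.integral_add I3 I4,
          intervalIntegral.integral_const_mul, intervalIntegral.integral_const_mul,
          intervalIntegral.integral_const_mul, intervalIntegral.integral_const_mul] at hmono
      exact hmono
    have hsum := Finset.sum_le_sum hstep
    -- split the sum on the right
    rw [Finset.sum_add_distrib, Finset.sum_add_distrib, Finset.sum_add_distrib,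
        Finset.sum_add_distrib, ← Finset.mul_sum, ← Finset.mul_sum, ← Finset.mul_sum,
        ← Finset.mul_sum] at hsum
    -- bound the H part via FTC
    have hHpart : (∑ i ∈ range N, ∫ s in (0:ℝ)..t, hT k U i s) ≤ 2*B^2 := by
      have hftc : (∑ i ∈ range N, Wt (i+1) * (U (i+1) t * U (i+2) t))
          - (∑ i ∈ range N, Wt (i+1) * (U (i+1) 0 * U (i+2) 0))
          = ∫ s in (0:ℝ)..t, ∑ i ∈ range N, hT k U i s :=
        ftc (fun s hsm => hs.derivH N hsm)
          (continuousOn_finset_sum _ (fun i _ => hs.conthT i)) ht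
      rw [intervalIntegral.integral_finset_sum (fun i _ => hinth i)] at hftc
      have hb1 := (hs.Hbounds N (show t ∈ Ici (0:ℝ) from ht)).2
      have hb2 := (hs.Hbounds N hz).1
      linarith [hftc, sq_nonneg B]
    have hp1 : (∑ i ∈ range N, ∫ s in (0:ℝ)..t, pT k U (i+1) s) ≤ PB := by
      have := hs.piB ht N
      rw [hPB]; linarith
    have hp2 := hpTshift N
    have hl1 : (∑ i ∈ range N, ∫ s in (0:ℝ)..t, lT k U (i+2) s) ≤ Lam (N+2) :=
      le_trans (hlTshift1 N) (hmonoLam (by omega))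
    have hl2 := hlTshift2 N
    have hc1 : (0:ℝ) ≤ 8*k+k/2 := by have := hs.hk0; positivity
    have hc2 : (0:ℝ) ≤ 8*k := by have := hs.hk0; positivity
    have hc3 : (0:ℝ) ≤ 1/(16*k^2) := by have := hs.hk0; positivity
    have m1 := mul_le_mul_of_nonneg_left hp1 hc1
    have m2 := mul_le_mul_of_nonneg_left hp2 hc2
    have m3 := mul_le_mul_of_nonneg_left hl1 hc3
    have m4 := mul_le_mul_of_nonneg_left hl2 hc3
    refine le_trans hsum ?_
    have hkne : k ≠ 0 := ne_of_gt hs.hk0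
    have e : A0 + 1/(8*k^2)*Lam (N+2) = 2*B^2 + ((8*k+k/2)*PB + (8*k*PB
        + (1/(16*k^2)*Lam (N+2) + 1/(16*k^2)*Lam (N+2)))) := by
      rw [hA0]
      field_simp
      ring
    rw [e]
    exact add_le_add hHpart (add_le_add m1 (add_le_add m2 (add_le_add m3 m4)))
  -- a priori growth
  have hgrow : ∀ N, Lam N ≤ (2*k)^N * G := by
    intro N
    have hterm : ∀ i ∈ range N, (∫ s in (0:ℝ)..t, lT k U (i+1) s) ≤ k^N * G := by
      intro i hi
      have hiN : i + 1 ≤ N := Finset.mem_range.mp hi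
      have hb : ∀ s ∈ Icc (0:ℝ) t, lT k U (i+1) s ≤ k^N * B^3 := by
        intro s hsm
        unfold lT
        have hU := hs.ub i s hsm.1
        have hUp := hs.pos (i+1) s hsm.1
        have hcube : (U (i+1) s)^3 ≤ B^3 := pow_le_pow_left₀ hUp hU 3
        have hW1 : Wt (i+1) ≤ 1 := Wt_le_one _
        have hkp : k^(i+1) ≤ k^N := pow_le_pow_right₀ hs.hk hiN
        have hkpos : (0:ℝ) < k^(i+1) := pow_pos hs.hk0 _
        have h3 : (0:ℝ) ≤ (U (i+1) s)^3 := by positivity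
        calc Wt (i+1) * k^(i+1) * (U (i+1) s)^3
            ≤ 1 * k^(i+1) * (U (i+1) s)^3 := by
              apply mul_le_mul_of_nonneg_right _ h3
              apply mul_le_mul_of_nonneg_right hW1 hkpos.le
          _ = k^(i+1) * (U (i+1) s)^3 := by ring
          _ ≤ k^N * (U (i+1) s)^3 := mul_le_mul_of_nonneg_right hkp h3
          _ ≤ k^N * B^3 := mul_le_mul_of_nonneg_left hcube (pow_pos hs.hk0 N).le
      have : (∫ s in (0:ℝ)..t, lT k U (i+1) s) ≤ ∫ _ in (0:ℝ)..t, k^N * B^3 := by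
        apply intervalIntegral.integral_mono_on ht (hint (i+1)) (integ continuousOn_const ht) hb
      rw [intervalIntegral.integral_const, smul_eq_mul] at this
      rw [hG]
      calc (∫ s in (0:ℝ)..t, lT k U (i+1) s) ≤ (t-0) * (k^N * B^3) := this
        _ = k^N * (B^3*t) := by ring
    have hcard := Finset.sum_le_card_nsmul (range N) _ _ hterm
    rw [Finset.card_range, nsmul_eq_mul] at hcard
    have hN2 : (N:ℝ) ≤ 2^N := by
      exact_mod_cast (Nat.lt_two_pow_self (n := N)).le
    have hkN : (0:ℝ) ≤ k^N * G := mul_nonneg (pow_pos hs.hk0 N).le hG0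
    calc Lam N ≤ (N:ℝ) * (k^N * G) := hcard
      _ ≤ (2:ℝ)^N * (k^N * G) := mul_le_mul_of_nonneg_right hN2 hkN
      _ = (2*k)^N * G := by rw [mul_pow]; ring
  -- downward induction
  have hind : ∀ j N, Lam N ≤ 2*A0 + (2*k)^N * G * (1/2)^j := by
    intro j
    induction j with
    | zero =>
      intro N
      have := hgrow N
      simp only [pow_zero, mul_one]
      linarith
    | succ j ih =>
      intro N
      have h1 := hrec N
      have h2 := ih (N+2)
      have hμ : (0:ℝ) < 1/(8*k^2) := by have := hs.hk0; positivity
      have hstep := mul_le_mul_of_nonneg_left h2 hμ.le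
      have howk : (1/(8*k^2)) * ((2*k)^(N+2) * G * (1/2)^j) = (2*k)^N * G * ((1/2)^(j+1) * (1/2)) + (2*k)^N * G * ((1/2)^(j+1) * (1/2)) := by
        have hkne : k ≠ 0 := ne_of_gt hs.hk0
        rw [pow_succ, pow_succ, pow_succ]
        field_simp
        ring
      have hA0step : (1/(8*k^2)) * (2*A0) ≤ A0 := by
        have hk1 := hs.hk
        rw [div_mul_eq_mul_div, one_mul, div_le_iff₀ (by positivity : (0:ℝ) < 8*k^2)]
        have h8 : (2:ℝ) ≤ 8*k^2 := by nlinarith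
        nlinarith [mul_nonneg hA00 (by linarith : (0:ℝ) ≤ 8*k^2 - 2)]
      have hGnn : (0:ℝ) ≤ (2*k)^N * G * (1/2)^(j+1) := by
        have hknn := hs.hk0
        positivity
      have hdistr : (1/(8*k^2)) * (2*A0 + (2*k)^(N+2) * G * (1/2)^j)
          = (1/(8*k^2)) * (2*A0) + (1/(8*k^2)) * ((2*k)^(N+2) * G * (1/2)^j) := by ring
      rw [hdistr, howk] at hstep
      have : (2*k)^N * G * ((1/2)^(j+1) * (1/2)) + (2*k)^N * G * ((1/2)^(j+1) * (1/2))
          = (2*k)^N * G * (1/2)^(j+1) := by ring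
      rw [this] at hstep
      linarith
  refine ⟨2*A0 + 1, by linarith, ?_⟩
  intro N
  have hLamN : Lam N = ∑ i ∈ range N, ∫ s in (0:ℝ)..t, lT k U (i+1) s := rfl
  rw [← hLamN]
  obtain ⟨j, hj⟩ := pow_unbounded_of_one_lt ((2*k)^N * G) (show (1:ℝ) < 2 by norm_num)
  have h := hind j N
  have hj' : (2*k)^N * G * (1/2)^j ≤ 1 := by
    have h2j : (0:ℝ) ≤ (1/2:ℝ)^j := by positivity
    calc (2*k)^N * G * (1/2)^j ≤ (2:ℝ)^j * (1/2)^j :=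
        mul_le_mul_of_nonneg_right hj.le h2j
      _ = ((2:ℝ) * (1/2))^j := by rw [mul_pow]
      _ = 1 := by norm_num
  exact le_trans h (add_le_add_right hj' (2*A0))

end IsSol

/-- cube comparison for the boundary flux -/
lemma cube_bound {x y x' y' c : ℝ} (hx : 0 ≤ x) (hy : 0 ≤ y) (hx' : 0 ≤ x')
    (hy' : 0 ≤ y') (hc : 0 ≤ c) :
    -(c*((x+y)*((x-y)*(x'-y')))) ≤ c*((8/3)*(x^3+y^3) + (4/3)*(x'^3+y'^3)) := by
  have h1 : -((x+y)*((x-y)*(x'-y'))) ≤ (x+y)^2*(x'+y') := by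
    nlinarith [mul_nonneg (add_nonneg hx hy)
      (add_nonneg (mul_nonneg hx hx') (mul_nonneg hy hy'))]
  have h2 : (x+y)^2*(x'+y') ≤ (8/3)*(x^3+y^3) + (4/3)*(x'^3+y'^3) := by
    have hs3 : (x+y)^3 ≤ 4*(x^3+y^3) := by
      nlinarith [mul_nonneg (add_nonneg hx hy) (sq_nonneg (x-y))]
    have hs3' : (x'+y')^3 ≤ 4*(x'^3+y'^3) := by
      nlinarith [mul_nonneg (add_nonneg hx' hy') (sq_nonneg (x'-y'))]
    have hschur : 3*((x+y)^2*(x'+y')) ≤ 2*(x+y)^3 + (x'+y')^3 := by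
      nlinarith [mul_nonneg (by linarith : (0:ℝ) ≤ 2*(x+y)+(x'+y'))
        (sq_nonneg ((x+y)-(x'+y')))]
    linarith
  calc -(c*((x+y)*((x-y)*(x'-y')))) = c*(-((x+y)*((x-y)*(x'-y')))) := by ring
    _ ≤ c*((x+y)^2*(x'+y')) := mul_le_mul_of_nonneg_left h1 hc
    _ ≤ _ := mul_le_mul_of_nonneg_left h2 hc

/-- Uniqueness for a pair of solutions with the same data. -/
lemma pair_unique {k f B : ℝ} {X Y : ℕ → ℝ → ℝ} (hsX : IsSol k f B X)
    (hsY : IsSol k f B Y) (hinit : ∀ i : ℕ, X (i+1) 0 = Y (i+1) 0) :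
    ∀ n : ℕ, 1 ≤ n → ∀ t ∈ Ici (0:ℝ), X n t = Y n t := by
  intro n hn t ht
  have hz : (0:ℝ) ∈ Ici (0:ℝ) := Set.self_mem_Ici
  obtain ⟨CX, hCX0, hCX⟩ := hsX.lamB ht
  obtain ⟨CY, hCY0, hCY⟩ := hsY.lamB ht
  -- continuity and integrability of building blocks
  have hintX : ∀ m, IntervalIntegrable (lT k X m) volume 0 t := fun m => integ (hsX.contlT m) ht
  have hintY : ∀ m, IntervalIntegrable (lT k Y m) volume 0 t := fun m => integ (hsY.contlT m) ht
  have hAX0 : ∀ m, 0 ≤ ∫ s in (0:ℝ)..t, lT k X m s := fun m =>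
    intervalIntegral.integral_nonneg ht (fun u hu => hsX.lT_nonneg m hu.1)
  have hAY0 : ∀ m, 0 ≤ ∫ s in (0:ℝ)..t, lT k Y m s := fun m =>
    intervalIntegral.integral_nonneg ht (fun u hu => hsY.lT_nonneg m hu.1)
  -- the raw derivative of Psi_N
  set raw : ℕ → ℝ → ℝ := fun N s => ∑ i ∈ range N,
      (2*Wt (i+1)*(X (i+1) s - Y (i+1) s)) *
        ((k^i*(X i s)^2 - k^(i+1)*X (i+1) s*X (i+2) s)
          - (k^i*(Y i s)^2 - k^(i+1)*Y (i+1) s*Y (i+2) s)) with hraw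
  have hderivPsi : ∀ N, ∀ s ∈ Ici (0:ℝ),
      HasDerivWithinAt (fun τ => ∑ i ∈ range N, Wt (i+1) * (X (i+1) τ - Y (i+1) τ)^2)
        (raw N s) (Ici 0) s := by
    intro N s hsm
    apply HasDerivWithinAt.fun_sum
    intro i _
    have h := (((hsX.deriv i s hsm).fun_sub (hsY.deriv i s hsm)).fun_pow 2).const_mul (Wt (i+1))
    refine h.congr_deriv ?_
    push_cast
    ring
  have hcontraw : ∀ N, ContinuousOn (raw N) (Ici 0) := by
    intro N
    apply continuousOn_finset_sum
    intro i _
    exact (continuousOn_const.mul ((hsX.cont (i+1)).sub (hsY.cont (i+1)))).mul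
      (((continuousOn_const.mul ((hsX.cont i).pow 2)).sub
          ((continuousOn_const.mul (hsX.cont (i+1))).mul (hsX.cont (i+2)))).sub
        ((continuousOn_const.mul ((hsY.cont i).pow 2)).sub
          ((continuousOn_const.mul (hsY.cont (i+1))).mul (hsY.cont (i+2)))))
  -- pointwise bound on raw
  have hrawle : ∀ N, ∀ s ∈ Ici (0:ℝ), raw N s ≤
      (8/3)*(lT k X N s + lT k Y N s) + (8/3)*(lT k X (N+1) s + lT k Y (N+1) s) := by
    intro N s hsm
    set Fv : ℕ → ℝ := fun i => 2*Wt (i+1)*k^i*((X i s + Y i s)*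
        ((X i s - Y i s)*(X (i+1) s - Y (i+1) s))) with hFv
    set dS : ℕ → ℝ := fun i => Wt (i+1)*k^(i+1)*((X (i+2) s + Y (i+2) s)
        *(X (i+1) s - Y (i+1) s)^2) with hdS
    have hterm : ∀ i : ℕ, (2*Wt (i+1)*(X (i+1) s - Y (i+1) s)) *
        ((k^i*(X i s)^2 - k^(i+1)*X (i+1) s*X (i+2) s)
          - (k^i*(Y i s)^2 - k^(i+1)*Y (i+1) s*Y (i+2) s))
        = (Fv i - Fv (i+1)) - dS i := by
      intro i
      simp only [hFv, hdS]
      rw [Wt_succ (i+1)]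
      ring
    have hident : raw N s = (Fv 0 - Fv N) - ∑ i ∈ range N, dS i := by
      rw [hraw]
      simp only []
      rw [Finset.sum_congr rfl (fun i _ => hterm i), Finset.sum_sub_distrib,
        Finset.sum_range_sub' Fv N]
    have hF0 : Fv 0 = 0 := by
      simp only [hFv]
      rw [hsX.h0 s, hsY.h0 s]
      ring
    have hdSnn : 0 ≤ ∑ i ∈ range N, dS i := by
      apply Finset.sum_nonneg
      intro i _
      simp only [hdS]
      have h1 := hsX.pos (i+2) s hsm
      have h2 := hsY.pos (i+2) s hsm
      have h3 := Wt_pos (i+1)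
      have h4 := pow_pos hsX.hk0 (i+1)
      positivity
    have hFNle : -Fv N ≤ (8/3)*(lT k X N s + lT k Y N s)
        + (8/3)*(lT k X (N+1) s + lT k Y (N+1) s) := by
      have hx := hsX.pos N s hsm
      have hy := hsY.pos N s hsm
      have hx' := hsX.pos (N+1) s hsm
      have hy' := hsY.pos (N+1) s hsm
      have hc : (0:ℝ) ≤ Wt N * k^N := mul_nonneg (Wt_pos N).le (pow_pos hsX.hk0 N).le
      have hcb := cube_bound hx hy hx' hy' hc
      have hFval : -Fv N = -((Wt N * k^N)*((X N s + Y N s)*((X N s - Y N s)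
          *(X (N+1) s - Y (N+1) s)))) := by
        simp only [hFv]
        rw [Wt_succ N]
        ring
      rw [hFval]
      refine le_trans hcb ?_
      unfold lT
      have hk1 : k^N ≤ k^(N+1) := pow_le_pow_right₀ hsX.hk (by omega)
      have hx3 : (0:ℝ) ≤ (X (N+1) s)^3 := by positivity
      have hy3 : (0:ℝ) ≤ (Y (N+1) s)^3 := by positivity
      have hWN : Wt N = 2 * Wt (N+1) := by rw [Wt_succ N]; ring
      have e1 : (Wt N * k^N)*((8/3)*((X N s)^3+(Y N s)^3))
          = (8/3)*(Wt N * k^N * (X N s)^3 + Wt N * k^N * (Y N s)^3) := by ring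
      have e2 : (Wt N * k^N)*((4/3)*((X (N+1) s)^3+(Y (N+1) s)^3))
          ≤ (8/3)*(Wt (N+1) * k^(N+1) * (X (N+1) s)^3
            + Wt (N+1) * k^(N+1) * (Y (N+1) s)^3) := by
        rw [hWN]
        have h1 : 2*Wt (N+1)*k^N*(X (N+1) s)^3 ≤ 2*Wt (N+1)*k^(N+1)*(X (N+1) s)^3 := by
          apply mul_le_mul_of_nonneg_right _ hx3
          have := Wt_pos (N+1)
          nlinarith
        have h2 : 2*Wt (N+1)*k^N*(Y (N+1) s)^3 ≤ 2*Wt (N+1)*k^(N+1)*(Y (N+1) s)^3 := by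
          apply mul_le_mul_of_nonneg_right _ hy3
          have := Wt_pos (N+1)
          nlinarith
        nlinarith
      nlinarith [e1, e2]
    calc raw N s = (Fv 0 - Fv N) - ∑ i ∈ range N, dS i := hident
      _ ≤ -Fv N := by rw [hF0]; linarith
      _ ≤ _ := hFNle
  -- Psi_N(0) = 0
  have hPsi0 : ∀ N, (∑ i ∈ range N, Wt (i+1) * (X (i+1) 0 - Y (i+1) 0)^2) = 0 := by
    intro N
    apply Finset.sum_eq_zero
    intro i _
    rw [hinit i]
    ring
  -- Psi_N(t) ≤ RN N
  set RN : ℕ → ℝ := fun N => (8/3)*((∫ s in (0:ℝ)..t, lT k X N s)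
      + (∫ s in (0:ℝ)..t, lT k Y N s))
    + (8/3)*((∫ s in (0:ℝ)..t, lT k X (N+1) s) + (∫ s in (0:ℝ)..t, lT k Y (N+1) s)) with hRN
  have hRNnn : ∀ N, 0 ≤ RN N := by
    intro N
    simp only [hRN]
    have := hAX0 N; have := hAY0 N; have := hAX0 (N+1); have := hAY0 (N+1)
    linarith
  have hPsit : ∀ N, (∑ i ∈ range N, Wt (i+1) * (X (i+1) t - Y (i+1) t)^2) ≤ RN N := by
    intro N
    have hftc : (∑ i ∈ range N, Wt (i+1) * (X (i+1) t - Y (i+1) t)^2)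
        - (∑ i ∈ range N, Wt (i+1) * (X (i+1) 0 - Y (i+1) 0)^2)
        = ∫ s in (0:ℝ)..t, raw N s :=
      ftc (fun s hsm => hderivPsi N s hsm) (hcontraw N) ht
    rw [hPsi0 N, sub_zero] at hftc
    rw [hftc]
    have hIb : IntervalIntegrable (fun s => (8/3)*(lT k X N s + lT k Y N s)
        + (8/3)*(lT k X (N+1) s + lT k Y (N+1) s)) volume 0 t :=
      (((hintX N).add (hintY N)).const_mul _).add (((hintX (N+1)).add (hintY (N+1))).const_mul _)
    have hmono := intervalIntegral.integral_mono_on ht (integ (hcontraw N) ht) hIb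
      (fun x hx => hrawle N x hx.1)
    refine le_trans hmono ?_
    rw [intervalIntegral.integral_add (((hintX N).add (hintY N)).const_mul _)
        (((hintX (N+1)).add (hintY (N+1))).const_mul _),
      intervalIntegral.integral_const_mul, intervalIntegral.integral_const_mul,
      intervalIntegral.integral_add (hintX N) (hintY N),
      intervalIntegral.integral_add (hintX (N+1)) (hintY (N+1))]
  -- single term below Psi_N
  have hsingle : ∀ N, n ≤ N → Wt n * (X n t - Y n t)^2 ≤ RN N := by
    intro N hnN
    refine le_trans ?_ (hPsit N)
    have hmem : n - 1 ∈ range N := Finset.mem_range.mpr (by omega)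
    have hterm : Wt n * (X n t - Y n t)^2
        = Wt ((n-1)+1) * (X ((n-1)+1) t - Y ((n-1)+1) t)^2 := by
      congr 1 <;> rw [show n - 1 + 1 = n from by omega]
    rw [hterm]
    apply Finset.single_le_sum (f := fun i => Wt (i+1) * (X (i+1) t - Y (i+1) t)^2) _ hmem
    intro i _
    have := Wt_pos (i+1)
    positivity
  -- summability of RN
  have hRNsum : ∀ K : ℕ, (∑ i ∈ range K, RN (i+1)) ≤ (16/3)*(CX + CY) := by
    intro K
    have h1 : (∑ i ∈ range K, ∫ s in (0:ℝ)..t, lT k X (i+1) s) ≤ CX := hCX K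
    have h2 : (∑ i ∈ range K, ∫ s in (0:ℝ)..t, lT k Y (i+1) s) ≤ CY := hCY K
    have h3 : (∑ i ∈ range K, ∫ s in (0:ℝ)..t, lT k X (i+2) s) ≤ CX := by
      have h := hCX (K+1)
      rw [Finset.sum_range_succ' (fun i => ∫ s in (0:ℝ)..t, lT k X (i+1) s) K] at h
      have := hAX0 1
      linarith
    have h4 : (∑ i ∈ range K, ∫ s in (0:ℝ)..t, lT k Y (i+2) s) ≤ CY := by
      have h := hCY (K+1)
      rw [Finset.sum_range_succ' (fun i => ∫ s in (0:ℝ)..t, lT k Y (i+1) s) K] at h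
      have := hAY0 1
      linarith
    have hsplit : (∑ i ∈ range K, RN (i+1))
        = (8/3)*((∑ i ∈ range K, ∫ s in (0:ℝ)..t, lT k X (i+1) s)
            + (∑ i ∈ range K, ∫ s in (0:ℝ)..t, lT k Y (i+1) s))
          + (8/3)*((∑ i ∈ range K, ∫ s in (0:ℝ)..t, lT k X (i+2) s)
            + (∑ i ∈ range K, ∫ s in (0:ℝ)..t, lT k Y (i+2) s)) := by
      simp only [hRN]
      rw [Finset.sum_add_distrib, ← Finset.mul_sum, ← Finset.mul_sum,
        Finset.sum_add_distrib, Finset.sum_add_distrib]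
    rw [hsplit]
    linarith
  -- conclusion via Archimedean property
  by_contra hne
  have hv : 0 < Wt n * (X n t - Y n t)^2 := by
    have h1 := Wt_pos n
    have h2 : X n t - Y n t ≠ 0 := fun h => hne (by linarith [sub_eq_zero.mp h])
    positivity
  set v := Wt n * (X n t - Y n t)^2 with hvdef
  have hm : ∀ m : ℕ, (m:ℝ) * v ≤ (16/3)*(CX + CY) := by
    intro m
    have hsub : Finset.Ico (n-1) (n-1+m) ⊆ range (n-1+m) := by
      rw [Finset.range_eq_Ico]
      exact Finset.Ico_subset_Ico (by omega) (le_refl _)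
    have hlow : ∀ i ∈ Finset.Ico (n-1) (n-1+m), v ≤ RN (i+1) := by
      intro i hi
      have hii := Finset.mem_Ico.mp hi
      exact hsingle (i+1) (by omega)
    have hcard : (m:ℝ) * v ≤ ∑ i ∈ Finset.Ico (n-1) (n-1+m), RN (i+1) := by
      have := Finset.card_nsmul_le_sum (Finset.Ico (n-1) (n-1+m)) (fun i => RN (i+1)) v hlow
      rw [Nat.card_Ico] at this
      rw [show n-1+m-(n-1) = m from by omega] at this
      rw [nsmul_eq_mul] at this
      linarith
    have hle : (∑ i ∈ Finset.Ico (n-1) (n-1+m), RN (i+1))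
        ≤ ∑ i ∈ range (n-1+m), RN (i+1) :=
      Finset.sum_le_sum_of_subset_of_nonneg hsub (fun i _ _ => hRNnn (i+1))
    exact le_trans hcard (le_trans hle (hRNsum (n-1+m)))
  obtain ⟨m, hm'⟩ := exists_nat_gt ((16/3)*(CX + CY) / v)
  have : (16/3)*(CX + CY) < (m:ℝ) * v := by
    rw [div_lt_iff₀ hv] at hm'
    linarith
  linarith [hm m]

/-- helper: componentwise bound from the Leray condition -/
lemma leray_ub {Z : ℕ → ℝ → ℝ} {MZ M0 : ℝ}
    (hL : ∀ t ∈ Ici (0:ℝ), (Summable fun m => (Z (m + 1) t) ^ 2)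
      ∧ (∑' m, (Z (m + 1) t) ^ 2) ≤ MZ)
    (hMM : MZ ≤ M0)
    (hpos : ∀ nn : ℕ, 1 ≤ nn → ∀ s ∈ Ici (0 : ℝ), 0 ≤ Z nn s) :
    ∀ i : ℕ, ∀ s ∈ Ici (0:ℝ), Z (i+1) s ≤ Real.sqrt M0 := by
  intro i s hs
  have h1 : (Z (i+1) s)^2 ≤ M0 := by
    have h2 := Summable.le_tsum (hL s hs).1 i (fun j _ => sq_nonneg _)
    have h3 := (hL s hs).2
    linarith
  have h0 : 0 ≤ M0 := le_trans (sq_nonneg _) h1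
  exact (Real.le_sqrt (hpos (i+1) (by omega) s hs) h0).mpr h1

/-- Let `α > 0`, `f ≥ 0`, and let `X`, `Y` be two non-negative Leray
solutions of the forced inviscid DN model (with `c_n = 2^(αn)`, convention `X_0 ≡ f`)
on `[0, ∞)` with the same initial condition. Then `X = Y`: non-negative Leray solutions
are unique. -/
theorem nonneg_leray_uniqueness (α f : ℝ) (hα : 0 < α) (hf : 0 ≤ f)
    (X Y : ℕ → ℝ → ℝ)
    (hX0 : ∀ t, X 0 t = f) (hY0 : ∀ t, Y 0 t = f)
    (hX : ∀ n : ℕ, 1 ≤ n → ∀ t ∈ Ici (0 : ℝ),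
      HasDerivWithinAt (X n)
        ((2 : ℝ) ^ (α * ((n : ℝ) - 1)) * (X (n - 1) t) ^ 2
          - (2 : ℝ) ^ (α * (n : ℝ)) * X n t * X (n + 1) t) (Ici 0) t)
    (hY : ∀ n : ℕ, 1 ≤ n → ∀ t ∈ Ici (0 : ℝ),
      HasDerivWithinAt (Y n)
        ((2 : ℝ) ^ (α * ((n : ℝ) - 1)) * (Y (n - 1) t) ^ 2
          - (2 : ℝ) ^ (α * (n : ℝ)) * Y n t * Y (n + 1) t) (Ici 0) t)
    (hXpos : ∀ n : ℕ, 1 ≤ n → ∀ t ∈ Ici (0 : ℝ), 0 ≤ X n t)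
    (hYpos : ∀ n : ℕ, 1 ≤ n → ∀ t ∈ Ici (0 : ℝ), 0 ≤ Y n t)
    (hXleray : ∃ M : ℝ, ∀ t ∈ Ici (0 : ℝ),
      (Summable fun n => (X (n + 1) t) ^ 2) ∧ (∑' n, (X (n + 1) t) ^ 2) ≤ M)
    (hYleray : ∃ M : ℝ, ∀ t ∈ Ici (0 : ℝ),
      (Summable fun n => (Y (n + 1) t) ^ 2) ∧ (∑' n, (Y (n + 1) t) ^ 2) ≤ M)
    (hinit : ∀ n : ℕ, 1 ≤ n → X n 0 = Y n 0) :
    ∀ n : ℕ, 1 ≤ n → ∀ t ∈ Ici (0 : ℝ), X n t = Y n t := by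
  obtain ⟨MX, hMX⟩ := hXleray
  obtain ⟨MY, hMY⟩ := hYleray
  set k := (2:ℝ)^α with hkdef
  set M0 := max (max MX MY) 0 with hM0
  set B := Real.sqrt M0 with hBdef
  have hk : 1 ≤ k := by
    rw [hkdef]
    calc (1:ℝ) = (2:ℝ)^(0:ℝ) := (Real.rpow_zero 2).symm
      _ ≤ (2:ℝ)^α := Real.rpow_le_rpow_of_exponent_le one_le_two hα.le
  have hcoef : ∀ i : ℕ, (2:ℝ)^(α*(i:ℝ)) = k^i := by
    intro i
    rw [hkdef, Real.rpow_mul (by norm_num : (0:ℝ) ≤ 2) α (i:ℝ), Real.rpow_natCast]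
  have hderconv : ∀ (Z : ℕ → ℝ → ℝ), (∀ n : ℕ, 1 ≤ n → ∀ t ∈ Ici (0 : ℝ),
      HasDerivWithinAt (Z n)
        ((2 : ℝ) ^ (α * ((n : ℝ) - 1)) * (Z (n - 1) t) ^ 2
          - (2 : ℝ) ^ (α * (n : ℝ)) * Z n t * Z (n + 1) t) (Ici 0) t) →
      ∀ i : ℕ, ∀ s ∈ Ici (0:ℝ), HasDerivWithinAt (Z (i+1))
        (k^i * (Z i s)^2 - k^(i+1) * Z (i+1) s * Z (i+2) s) (Ici 0) s := by
    intro Z hZ i s hs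
    have h := hZ (i+1) (by omega) s hs
    have e1 : α * ((((i+1):ℕ):ℝ) - 1) = α * (i:ℝ) := by push_cast; ring
    rw [e1, hcoef i, hcoef (i+1)] at h
    simpa using h
  have hsX : IsSol k f B X :=
    { hk := hk
      hB := Real.sqrt_nonneg _
      hf := hf
      h0 := hX0
      deriv := hderconv X hX
      pos := by
        intro m s hs
        cases m with
        | zero => rw [hX0 s]; exact hf
        | succ i => exact hXpos (i+1) (by omega) s hs
      ub := leray_ub hMX (by rw [hM0]; exact le_max_of_le_left (le_max_left _ _)) hXpos }
  have hsY : IsSol k f B Y :=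
    { hk := hk
      hB := Real.sqrt_nonneg _
      hf := hf
      h0 := hY0
      deriv := hderconv Y hY
      pos := by
        intro m s hs
        cases m with
        | zero => rw [hY0 s]; exact hf
        | succ i => exact hYpos (i+1) (by omega) s hs
      ub := leray_ub hMY (by rw [hM0]; exact le_max_of_le_left (le_max_right _ _)) hYpos }
  exact pair_unique hsX hsY (fun i => hinit (i+1) (by omega))

end Stmt9
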